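/- Let α > 0 and ψ ∈ C²(ℝ). Define η_ψ(ρ, u) := (ψ(u + √α ρ) + ψ(u − √α ρ))/2 on ℝ². Then: (i) η_ψ is convex on ℝ² (as a function of (ρ, u) jointly) if and only if ψ is convex on ℝ; (ii) if φ ∈ C¹(ℝ) satisfies φ'(v) = v·ψ'(v) for all v, then q_ψ(ρ,u) := (φ(u + √α ρ) + φ(u − √α ρ))/2 satisfies the entropy-flux relations ∂_u q_ψ = ρ ∂_ρ η_ψ + u ∂_u η_ψ and ∂_ρ q_ψ = u ∂_ρ η_ψ + αρ ∂_u η_ψ at every (ρ,u) ∈ ℝ². -/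

import Mathlib

/-- (i) `η_ψ(ρ,u) = (ψ(u+√αρ) + ψ(u-√αρ))/2` is jointly convex in `(ρ,u)` iff `ψ` is
convex; (ii) if `φ' (v) = v ψ'(v)` then `q_ψ(ρ,u) = (φ(u+√αρ) + φ(u-√αρ))/2` satisfies
the entropy-flux relations for the coupled Burgers system. -/
theorem stmt15 (α : ℝ) (hα : 0 < α) (ψ : ℝ → ℝ) (hψ : ContDiff ℝ 2 ψ) :
    (ConvexOn ℝ Set.univ (fun p : ℝ × ℝ =>
        (ψ (p.2 + Real.sqrt α * p.1) + ψ (p.2 - Real.sqrt α * p.1)) / 2) ↔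
      ConvexOn ℝ Set.univ ψ) ∧
    (∀ φ : ℝ → ℝ, (∀ v : ℝ, HasDerivAt φ (v * deriv ψ v) v) →
      ∀ r v : ℝ,
        deriv (fun w => (φ (w + Real.sqrt α * r) + φ (w - Real.sqrt α * r)) / 2) v =
          r * deriv (fun s =>
              (ψ (v + Real.sqrt α * s) + ψ (v - Real.sqrt α * s)) / 2) r +
            v * deriv (fun w =>
              (ψ (w + Real.sqrt α * r) + ψ (w - Real.sqrt α * r)) / 2) v ∧
        deriv (fun s => (φ (v + Real.sqrt α * s) + φ (v - Real.sqrt α * s)) / 2) r =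
          v * deriv (fun s =>
              (ψ (v + Real.sqrt α * s) + ψ (v - Real.sqrt α * s)) / 2) r +
            α * r * deriv (fun w =>
              (ψ (w + Real.sqrt α * r) + ψ (w - Real.sqrt α * r)) / 2) v) := by
  have hcpos : 0 < Real.sqrt α := Real.sqrt_pos.mpr hα
  set c := Real.sqrt α with hcdef
  have hc2 : c * c = α := Real.mul_self_sqrt hα.le
  have hψd : ∀ x : ℝ, HasDerivAt ψ (deriv ψ x) x := fun x =>
    ((hψ.differentiable (by norm_num)) x).hasDerivAt
  constructor
  · constructor
    · intro h
      refine ⟨convex_univ, fun x _ y _ a b ha hb hab => ?_⟩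
      have hkey := h.2 (Set.mem_univ ((x / (2 * c), x / 2) : ℝ × ℝ))
        (Set.mem_univ ((y / (2 * c), y / 2) : ℝ × ℝ)) ha hb hab
      have hc0 : c ≠ 0 := ne_of_gt hcpos
      have e1 : (a • ((x / (2 * c), x / 2) : ℝ × ℝ) + b • (y / (2 * c), y / 2)).2
          + c * (a • ((x / (2 * c), x / 2) : ℝ × ℝ) + b • (y / (2 * c), y / 2)).1
          = a * x + b * y := by
        simp [Prod.smul_def, smul_eq_mul]
        field_simp
        ring
      have e2 : (a • ((x / (2 * c), x / 2) : ℝ × ℝ) + b • (y / (2 * c), y / 2)).2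
          - c * (a • ((x / (2 * c), x / 2) : ℝ × ℝ) + b • (y / (2 * c), y / 2)).1
          = 0 := by
        simp [Prod.smul_def, smul_eq_mul]
        field_simp
        ring
      have e3 : x / 2 + c * (x / (2 * c)) = x := by field_simp; ring
      have e4 : x / 2 - c * (x / (2 * c)) = 0 := by field_simp; ring
      have e5 : y / 2 + c * (y / (2 * c)) = y := by field_simp; ring
      have e6 : y / 2 - c * (y / (2 * c)) = 0 := by field_simp; ring
      simp only [e1, e2, e3, e4, e5, e6, smul_eq_mul] at hkey
      have hab' : a * ψ 0 + b * ψ 0 = ψ 0 := by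
        have : (a + b) * ψ 0 = 1 * ψ 0 := by rw [hab]
        linarith [this]
      simp only [smul_eq_mul]
      linarith [hkey]
    · intro h
      refine ⟨convex_univ, fun p _ q _ a b ha hb hab => ?_⟩
      have h1 := h.2 (Set.mem_univ (p.2 + c * p.1)) (Set.mem_univ (q.2 + c * q.1)) ha hb hab
      have h2 := h.2 (Set.mem_univ (p.2 - c * p.1)) (Set.mem_univ (q.2 - c * q.1)) ha hb hab
      simp only [smul_eq_mul] at h1 h2 ⊢
      have e1 : (a • p + b • q).2 + c * (a • p + b • q).1
          = a * (p.2 + c * p.1) + b * (q.2 + c * q.1) := by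
        simp [Prod.smul_def, smul_eq_mul]; ring
      have e2 : (a • p + b • q).2 - c * (a • p + b • q).1
          = a * (p.2 - c * p.1) + b * (q.2 - c * q.1) := by
        simp [Prod.smul_def, smul_eq_mul]; ring
      rw [e1, e2]
      linarith [h1, h2]
  · intro φ hφ r v
    have hφd : ∀ x : ℝ, HasDerivAt φ (x * deriv ψ x) x := hφ
    -- derivatives in w at v
    have Wplus : ∀ (f : ℝ → ℝ) (f' : ℝ → ℝ), (∀ x, HasDerivAt f (f' x) x) →
        HasDerivAt (fun w : ℝ => f (w + c * r)) (f' (v + c * r)) v := by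
      intro f f' hf
      have := (hf (v + c * r)).comp v ((hasDerivAt_id v).add_const (c * r))
      simpa [Function.comp_def] using this
    have Wminus : ∀ (f : ℝ → ℝ) (f' : ℝ → ℝ), (∀ x, HasDerivAt f (f' x) x) →
        HasDerivAt (fun w : ℝ => f (w - c * r)) (f' (v - c * r)) v := by
      intro f f' hf
      have := (hf (v - c * r)).comp v ((hasDerivAt_id v).sub_const (c * r))
      simpa [Function.comp_def] using this
    have Splus : ∀ (f : ℝ → ℝ) (f' : ℝ → ℝ), (∀ x, HasDerivAt f (f' x) x) →
        HasDerivAt (fun s : ℝ => f (v + c * s)) (f' (v + c * r) * c) r := by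
      intro f f' hf
      have hin : HasDerivAt (fun s : ℝ => v + c * s) c r := by
        simpa using ((hasDerivAt_id r).const_mul c).const_add v
      exact (hf (v + c * r)).comp r hin
    have Sminus : ∀ (f : ℝ → ℝ) (f' : ℝ → ℝ), (∀ x, HasDerivAt f (f' x) x) →
        HasDerivAt (fun s : ℝ => f (v - c * s)) (f' (v - c * r) * (-c)) r := by
      intro f f' hf
      have hin : HasDerivAt (fun s : ℝ => v - c * s) (-c) r := by
        simpa using ((hasDerivAt_id r).const_mul c).const_sub v
      exact (hf (v - c * r)).comp r hin
    have Dqv : deriv (fun w => (φ (w + c * r) + φ (w - c * r)) / 2) v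
        = ((v + c * r) * deriv ψ (v + c * r) + (v - c * r) * deriv ψ (v - c * r)) / 2 :=
      (((Wplus φ _ hφd).add (Wminus φ _ hφd)).div_const 2).deriv
    have Dqr : deriv (fun s => (φ (v + c * s) + φ (v - c * s)) / 2) r
        = ((v + c * r) * deriv ψ (v + c * r) * c
            + (v - c * r) * deriv ψ (v - c * r) * (-c)) / 2 :=
      (((Splus φ _ hφd).add (Sminus φ _ hφd)).div_const 2).deriv
    have Dηv : deriv (fun w => (ψ (w + c * r) + ψ (w - c * r)) / 2) v
        = (deriv ψ (v + c * r) + deriv ψ (v - c * r)) / 2 :=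
      (((Wplus ψ _ hψd).add (Wminus ψ _ hψd)).div_const 2).deriv
    have Dηr : deriv (fun s => (ψ (v + c * s) + ψ (v - c * s)) / 2) r
        = (deriv ψ (v + c * r) * c + deriv ψ (v - c * r) * (-c)) / 2 :=
      (((Splus ψ _ hψd).add (Sminus ψ _ hψd)).div_const 2).deriv
    rw [Dqv, Dqr, Dηv, Dηr]
    constructor
    · ring
    · rw [← hc2]; ring
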